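/- Fix Φ₁, Φ₂, Φ₃ ∈ [0, π). For r₁, r₂, r₃ > 0 with r₁ + r₂ + r₃ < π define ℓ₁ = arccos(cos r₂ cos r₃ + sin r₂ sin r₃ cos Φ₁), ℓ₂ = arccos(cos r₃ cos r₁ + sin r₃ sin r₁ cos Φ₂), ℓ₃ = arccos(cos r₁ cos r₂ + sin r₁ sin r₂ cos Φ₃), and define θ₁ = arccos((cos ℓ₁ − cos ℓ₂ cos ℓ₃)/(sin ℓ₂ sin ℓ₃)), with θ₂, θ₃ defined by cyclic permutation of the indices. Suppose at the point (r₁, r₂, r₃) the lengths ℓ₁, ℓ₂, ℓ₃ satisfy the strict triangle inequalities and ℓ₁ + ℓ₂ + ℓ₃ < 2π. Then the partial derivatives satisfy the symmetry sin(r₂) · ∂θ₁/∂r₂ = sin(r₁) · ∂θ₂/∂r₁ (and similarly for the other pairs of indices). -/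

import Mathlib

open Real

/-- The spherical distance between the centers of the circles on the unit sphere of radii
`r (i+1)` and `r (i+2)` meeting at exterior angle `Φ i` (indices mod 3). -/
noncomputable def ellS (Φ r : Fin 3 → ℝ) (i : Fin 3) : ℝ :=
  Real.arccos (Real.cos (r (i + 1)) * Real.cos (r (i + 2)) +
    Real.sin (r (i + 1)) * Real.sin (r (i + 2)) * Real.cos (Φ i))

/-- The inner angle at the `i`-th vertex of the spherical triangle with side lengths
`ellS Φ r`, via the spherical law of cosines. -/
noncomputable def thetaS (Φ r : Fin 3 → ℝ) (i : Fin 3) : ℝ :=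
  Real.arccos ((Real.cos (ellS Φ r i) -
      Real.cos (ellS Φ r (i + 1)) * Real.cos (ellS Φ r (i + 2))) /
    (Real.sin (ellS Φ r (i + 1)) * Real.sin (ellS Φ r (i + 2))))

set_option maxHeartbeats 1000000 in
lemma hasDerivAt_theta (e a b : ℝ → ℝ) (e' a' b' x w : ℝ)
    (he : HasDerivAt e e' x) (ha : HasDerivAt a a' x) (hb : HasDerivAt b b' x)
    (hE1 : -1 < e x) (hE2 : e x < 1) (hA1 : -1 < a x) (hA2 : a x < 1)
    (hB1 : -1 < b x) (hB2 : b x < 1)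
    (hw : w ^ 2 = (1 - a x ^ 2) * (1 - b x ^ 2) - (e x - a x * b x) ^ 2)
    (hwpos : 0 < w) :
    HasDerivAt (fun y => Real.arccos ((Real.cos (Real.arccos (e y)) -
        Real.cos (Real.arccos (a y)) * Real.cos (Real.arccos (b y))) /
      (Real.sin (Real.arccos (a y)) * Real.sin (Real.arccos (b y)))))
      (-((e' - a' * b x - a x * b') * (1 - a x ^ 2) * (1 - b x ^ 2) +
          (e x - a x * b x) * (a x * a' * (1 - b x ^ 2) + b x * b' * (1 - a x ^ 2))) /
        ((1 - a x ^ 2) * (1 - b x ^ 2) * w)) x := by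
  set A := a x with hA
  set B := b x with hB
  set E := e x with hE
  have hA2sq : 0 < 1 - A ^ 2 := by nlinarith
  have hB2sq : 0 < 1 - B ^ 2 := by nlinarith
  have hE2sq : 0 < 1 - E ^ 2 := by nlinarith
  set uA := Real.sqrt (1 - A ^ 2) with huA
  set uB := Real.sqrt (1 - B ^ 2) with huB
  have huApos : 0 < uA := Real.sqrt_pos.mpr hA2sq
  have huBpos : 0 < uB := Real.sqrt_pos.mpr hB2sq
  have huAsq : uA ^ 2 = 1 - A ^ 2 := Real.sq_sqrt hA2sq.le
  have huBsq : uB ^ 2 = 1 - B ^ 2 := Real.sq_sqrt hB2sq.le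
  have hca : HasDerivAt (fun y => Real.cos (Real.arccos (a y))) a' x := by
    have h := ((Real.hasDerivAt_cos (Real.arccos A)).comp x
      ((Real.hasDerivAt_arccos hA1.ne' hA2.ne).comp x ha))
    convert h using 1
    · rfl
    · rfl
    · rfl
    rw [Real.sin_arccos]
    field_simp
  have hcb : HasDerivAt (fun y => Real.cos (Real.arccos (b y))) b' x := by
    have h := ((Real.hasDerivAt_cos (Real.arccos B)).comp x
      ((Real.hasDerivAt_arccos hB1.ne' hB2.ne).comp x hb))
    convert h using 1
    · rfl
    · rfl
    · rfl
    rw [Real.sin_arccos]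
    field_simp
  have hce : HasDerivAt (fun y => Real.cos (Real.arccos (e y))) e' x := by
    have h := ((Real.hasDerivAt_cos (Real.arccos E)).comp x
      ((Real.hasDerivAt_arccos hE1.ne' hE2.ne).comp x he))
    convert h using 1
    · rfl
    · rfl
    · rfl
    rw [Real.sin_arccos]
    field_simp
  have hsa : HasDerivAt (fun y => Real.sin (Real.arccos (a y))) (-(A * a') / uA) x := by
    have h := ((Real.hasDerivAt_sin (Real.arccos A)).comp x
      ((Real.hasDerivAt_arccos hA1.ne' hA2.ne).comp x ha))
    convert h using 1
    · rfl
    · rfl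
    · rfl
    rw [Real.cos_arccos hA1.le hA2.le]
    field_simp
    rw [← huA]
  have hsb : HasDerivAt (fun y => Real.sin (Real.arccos (b y))) (-(B * b') / uB) x := by
    have h := ((Real.hasDerivAt_sin (Real.arccos B)).comp x
      ((Real.hasDerivAt_arccos hB1.ne' hB2.ne).comp x hb))
    convert h using 1
    · rfl
    · rfl
    · rfl
    rw [Real.cos_arccos hB1.le hB2.le]
    field_simp
    rw [← huB]
  have hnum : HasDerivAt (fun y => Real.cos (Real.arccos (e y)) -
      Real.cos (Real.arccos (a y)) * Real.cos (Real.arccos (b y)))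
      (e' - (a' * Real.cos (Real.arccos B) + Real.cos (Real.arccos A) * b')) x :=
    hce.sub (hca.mul hcb)
  have hden : HasDerivAt (fun y => Real.sin (Real.arccos (a y)) * Real.sin (Real.arccos (b y)))
      ((-(A * a') / uA) * Real.sin (Real.arccos B) + Real.sin (Real.arccos A) * (-(B * b') / uB)) x :=
    hsa.mul hsb
  have hdenx : Real.sin (Real.arccos A) * Real.sin (Real.arccos B) ≠ 0 := by
    rw [Real.sin_arccos, Real.sin_arccos, ← huA, ← huB]
    positivity
  have hF := hnum.div hden hdenx
  have hFx : (Real.cos (Real.arccos E) - Real.cos (Real.arccos A) * Real.cos (Real.arccos B)) /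
      (Real.sin (Real.arccos A) * Real.sin (Real.arccos B)) = (E - A * B) / (uA * uB) := by
    rw [Real.cos_arccos hE1.le hE2.le, Real.cos_arccos hA1.le hA2.le,
      Real.cos_arccos hB1.le hB2.le, Real.sin_arccos, Real.sin_arccos, ← huA, ← huB]
  have hwsq : w ^ 2 = (uA * uB) ^ 2 - (E - A * B) ^ 2 := by
    rw [mul_pow, huAsq, huBsq]; linarith [hw]
  have hFne1 : (E - A * B) / (uA * uB) ≠ 1 := by
    intro h
    rw [div_eq_one_iff_eq (by positivity)] at h
    have : w ^ 2 = 0 := by rw [hwsq, h]; ring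
    nlinarith
  have hFnem1 : (E - A * B) / (uA * uB) ≠ -1 := by
    intro h
    rw [div_eq_iff (by positivity : (uA*uB) ≠ 0)] at h
    have : w ^ 2 = 0 := by rw [hwsq, h]; ring
    nlinarith
  have hFne1' : (Real.cos (Real.arccos E) - Real.cos (Real.arccos A) * Real.cos (Real.arccos B)) /
      (Real.sin (Real.arccos A) * Real.sin (Real.arccos B)) ≠ 1 := by rw [hFx]; exact hFne1
  have hFnem1' : (Real.cos (Real.arccos E) - Real.cos (Real.arccos A) * Real.cos (Real.arccos B)) /
      (Real.sin (Real.arccos A) * Real.sin (Real.arccos B)) ≠ -1 := by rw [hFx]; exact hFnem1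
  have houter := Real.hasDerivAt_arccos hFnem1' hFne1'
  have hcomp := houter.comp x hF
  convert hcomp using 1
  · rfl
  · rfl
  · rfl
  rw [hFx]
  have hsF : Real.sqrt (1 - ((E - A * B) / (uA * uB)) ^ 2) = w / (uA * uB) := by
    rw [show 1 - ((E - A * B) / (uA * uB)) ^ 2 = (w / (uA * uB)) ^ 2 by
      field_simp
      linarith [hwsq]]
    exact Real.sqrt_sq (by positivity)
  rw [hsF, Real.cos_arccos hE1.le hE2.le, Real.cos_arccos hA1.le hA2.le,
    Real.cos_arccos hB1.le hB2.le, Real.sin_arccos, Real.sin_arccos, ← huA, ← huB,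
    ← huAsq, ← huBsq]
  have hwne : w ≠ 0 := hwpos.ne'
  have huAne : uA ≠ 0 := huApos.ne'
  have huBne : uB ≠ 0 := huBpos.ne'
  field_simp
  ring

set_option maxHeartbeats 2000000 in
lemma pairAux (q0 q1 q2 a0 a1 a2 : ℝ)
    (hg0m : -1 < Real.cos a1 * Real.cos a2 + Real.sin a1 * Real.sin a2 * Real.cos q0)
    (hg0p : Real.cos a1 * Real.cos a2 + Real.sin a1 * Real.sin a2 * Real.cos q0 < 1)
    (hg1m : -1 < Real.cos a2 * Real.cos a0 + Real.sin a2 * Real.sin a0 * Real.cos q1)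
    (hg1p : Real.cos a2 * Real.cos a0 + Real.sin a2 * Real.sin a0 * Real.cos q1 < 1)
    (hg2m : -1 < Real.cos a0 * Real.cos a1 + Real.sin a0 * Real.sin a1 * Real.cos q2)
    (hg2p : Real.cos a0 * Real.cos a1 + Real.sin a0 * Real.sin a1 * Real.cos q2 < 1)
    (hV : 0 < 1 - (Real.cos a1 * Real.cos a2 + Real.sin a1 * Real.sin a2 * Real.cos q0) ^ 2
        - (Real.cos a2 * Real.cos a0 + Real.sin a2 * Real.sin a0 * Real.cos q1) ^ 2
        - (Real.cos a0 * Real.cos a1 + Real.sin a0 * Real.sin a1 * Real.cos q2) ^ 2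
        + 2 * (Real.cos a1 * Real.cos a2 + Real.sin a1 * Real.sin a2 * Real.cos q0)
            * (Real.cos a2 * Real.cos a0 + Real.sin a2 * Real.sin a0 * Real.cos q1)
            * (Real.cos a0 * Real.cos a1 + Real.sin a0 * Real.sin a1 * Real.cos q2)) :
    Real.sin a1 * deriv (fun x => Real.arccos ((Real.cos (Real.arccos (Real.cos x * Real.cos a2 + Real.sin x * Real.sin a2 * Real.cos q0)) -
        Real.cos (Real.arccos (Real.cos a2 * Real.cos a0 + Real.sin a2 * Real.sin a0 * Real.cos q1)) *
          Real.cos (Real.arccos (Real.cos a0 * Real.cos x + Real.sin a0 * Real.sin x * Real.cos q2))) /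
      (Real.sin (Real.arccos (Real.cos a2 * Real.cos a0 + Real.sin a2 * Real.sin a0 * Real.cos q1)) *
        Real.sin (Real.arccos (Real.cos a0 * Real.cos x + Real.sin a0 * Real.sin x * Real.cos q2))))) a1 =
    Real.sin a0 * deriv (fun x => Real.arccos ((Real.cos (Real.arccos (Real.cos a2 * Real.cos x + Real.sin a2 * Real.sin x * Real.cos q1)) -
        Real.cos (Real.arccos (Real.cos x * Real.cos a1 + Real.sin x * Real.sin a1 * Real.cos q2)) *
          Real.cos (Real.arccos (Real.cos a1 * Real.cos a2 + Real.sin a1 * Real.sin a2 * Real.cos q0))) /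
      (Real.sin (Real.arccos (Real.cos x * Real.cos a1 + Real.sin x * Real.sin a1 * Real.cos q2)) *
        Real.sin (Real.arccos (Real.cos a1 * Real.cos a2 + Real.sin a1 * Real.sin a2 * Real.cos q0))))) a0 := by
  set gA0 := Real.cos a1 * Real.cos a2 + Real.sin a1 * Real.sin a2 * Real.cos q0 with hgA0
  set gA1 := Real.cos a2 * Real.cos a0 + Real.sin a2 * Real.sin a0 * Real.cos q1 with hgA1
  set gA2 := Real.cos a0 * Real.cos a1 + Real.sin a0 * Real.sin a1 * Real.cos q2 with hgA2
  set w := Real.sqrt (1 - gA0 ^ 2 - gA1 ^ 2 - gA2 ^ 2 + 2 * gA0 * gA1 * gA2) with hwdef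
  have hwpos : 0 < w := Real.sqrt_pos.mpr hV
  have hwsq : w ^ 2 = 1 - gA0 ^ 2 - gA1 ^ 2 - gA2 ^ 2 + 2 * gA0 * gA1 * gA2 :=
    Real.sq_sqrt hV.le
  have h1g0 : 0 < 1 - gA0 ^ 2 := by nlinarith
  have h1g1 : 0 < 1 - gA1 ^ 2 := by nlinarith
  have h1g2 : 0 < 1 - gA2 ^ 2 := by nlinarith
  -- left derivative
  have heL : HasDerivAt (fun x => Real.cos x * Real.cos a2 + Real.sin x * Real.sin a2 * Real.cos q0)
      (-Real.sin a1 * Real.cos a2 + Real.cos a1 * Real.sin a2 * Real.cos q0) a1 :=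
    ((Real.hasDerivAt_cos a1).mul_const (Real.cos a2)).add
      (((Real.hasDerivAt_sin a1).mul_const (Real.sin a2)).mul_const (Real.cos q0))
  have hbL : HasDerivAt (fun x => Real.cos a0 * Real.cos x + Real.sin a0 * Real.sin x * Real.cos q2)
      (Real.cos a0 * -Real.sin a1 + Real.sin a0 * Real.cos a1 * Real.cos q2) a1 :=
    (((Real.hasDerivAt_cos a1).const_mul (Real.cos a0))).add
      ((((Real.hasDerivAt_sin a1).const_mul (Real.sin a0))).mul_const (Real.cos q2))
  have hL : HasDerivAt (fun x => Real.arccos ((Real.cos (Real.arccos (Real.cos x * Real.cos a2 + Real.sin x * Real.sin a2 * Real.cos q0)) -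
        Real.cos (Real.arccos gA1) *
          Real.cos (Real.arccos (Real.cos a0 * Real.cos x + Real.sin a0 * Real.sin x * Real.cos q2))) /
      (Real.sin (Real.arccos gA1) *
        Real.sin (Real.arccos (Real.cos a0 * Real.cos x + Real.sin a0 * Real.sin x * Real.cos q2)))))
      (-(((-Real.sin a1 * Real.cos a2 + Real.cos a1 * Real.sin a2 * Real.cos q0) - 0 * gA2 -
            gA1 * (Real.cos a0 * -Real.sin a1 + Real.sin a0 * Real.cos a1 * Real.cos q2)) * (1 - gA1 ^ 2) * (1 - gA2 ^ 2) +
          (gA0 - gA1 * gA2) * (gA1 * 0 * (1 - gA2 ^ 2) +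
            gA2 * (Real.cos a0 * -Real.sin a1 + Real.sin a0 * Real.cos a1 * Real.cos q2) * (1 - gA1 ^ 2))) /
        ((1 - gA1 ^ 2) * (1 - gA2 ^ 2) * w)) a1 :=
    hasDerivAt_theta
      (fun x => Real.cos x * Real.cos a2 + Real.sin x * Real.sin a2 * Real.cos q0)
      (fun _ => gA1)
      (fun x => Real.cos a0 * Real.cos x + Real.sin a0 * Real.sin x * Real.cos q2)
      (-Real.sin a1 * Real.cos a2 + Real.cos a1 * Real.sin a2 * Real.cos q0) 0
      (Real.cos a0 * -Real.sin a1 + Real.sin a0 * Real.cos a1 * Real.cos q2) a1 w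
      heL (hasDerivAt_const a1 gA1) hbL hg0m hg0p hg1m hg1p hg2m hg2p
      (by rw [hwsq]; ring) hwpos
  -- right derivative
  have heR : HasDerivAt (fun x => Real.cos a2 * Real.cos x + Real.sin a2 * Real.sin x * Real.cos q1)
      (Real.cos a2 * -Real.sin a0 + Real.sin a2 * Real.cos a0 * Real.cos q1) a0 :=
    (((Real.hasDerivAt_cos a0).const_mul (Real.cos a2))).add
      ((((Real.hasDerivAt_sin a0).const_mul (Real.sin a2))).mul_const (Real.cos q1))
  have haR : HasDerivAt (fun x => Real.cos x * Real.cos a1 + Real.sin x * Real.sin a1 * Real.cos q2)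
      (-Real.sin a0 * Real.cos a1 + Real.cos a0 * Real.sin a1 * Real.cos q2) a0 :=
    ((Real.hasDerivAt_cos a0).mul_const (Real.cos a1)).add
      (((Real.hasDerivAt_sin a0).mul_const (Real.sin a1)).mul_const (Real.cos q2))
  have hR : HasDerivAt (fun x => Real.arccos ((Real.cos (Real.arccos (Real.cos a2 * Real.cos x + Real.sin a2 * Real.sin x * Real.cos q1)) -
        Real.cos (Real.arccos (Real.cos x * Real.cos a1 + Real.sin x * Real.sin a1 * Real.cos q2)) *
          Real.cos (Real.arccos gA0)) /
      (Real.sin (Real.arccos (Real.cos x * Real.cos a1 + Real.sin x * Real.sin a1 * Real.cos q2)) *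
        Real.sin (Real.arccos gA0))))
      (-(((Real.cos a2 * -Real.sin a0 + Real.sin a2 * Real.cos a0 * Real.cos q1) -
            (-Real.sin a0 * Real.cos a1 + Real.cos a0 * Real.sin a1 * Real.cos q2) * gA0 - gA2 * 0) * (1 - gA2 ^ 2) * (1 - gA0 ^ 2) +
          (gA1 - gA2 * gA0) * (gA2 * (-Real.sin a0 * Real.cos a1 + Real.cos a0 * Real.sin a1 * Real.cos q2) * (1 - gA0 ^ 2) +
            gA0 * 0 * (1 - gA2 ^ 2))) /
        ((1 - gA2 ^ 2) * (1 - gA0 ^ 2) * w)) a0 :=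
    hasDerivAt_theta
      (fun x => Real.cos a2 * Real.cos x + Real.sin a2 * Real.sin x * Real.cos q1)
      (fun x => Real.cos x * Real.cos a1 + Real.sin x * Real.sin a1 * Real.cos q2)
      (fun _ => gA0)
      (Real.cos a2 * -Real.sin a0 + Real.sin a2 * Real.cos a0 * Real.cos q1)
      (-Real.sin a0 * Real.cos a1 + Real.cos a0 * Real.sin a1 * Real.cos q2) 0 a0 w
      heR haR (hasDerivAt_const a0 gA0) hg1m hg1p hg2m hg2p hg0m hg0p
      (by rw [hwsq]; ring) hwpos
  rw [hL.deriv, hR.deriv]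
  have hden1 : ((1 - gA1 ^ 2) * (1 - gA2 ^ 2) * w) ≠ 0 := by positivity
  have hden2 : ((1 - gA2 ^ 2) * w) ≠ 0 := by positivity
  have hden3 : ((1 - gA2 ^ 2) * (1 - gA0 ^ 2) * w) ≠ 0 := by positivity
  have h2L : -(((-Real.sin a1 * Real.cos a2 + Real.cos a1 * Real.sin a2 * Real.cos q0) - 0 * gA2 -
            gA1 * (Real.cos a0 * -Real.sin a1 + Real.sin a0 * Real.cos a1 * Real.cos q2)) * (1 - gA1 ^ 2) * (1 - gA2 ^ 2) +
          (gA0 - gA1 * gA2) * (gA1 * 0 * (1 - gA2 ^ 2) +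
            gA2 * (Real.cos a0 * -Real.sin a1 + Real.sin a0 * Real.cos a1 * Real.cos q2) * (1 - gA1 ^ 2))) /
        ((1 - gA1 ^ 2) * (1 - gA2 ^ 2) * w)
      = -((-Real.sin a1 * Real.cos a2 + Real.cos a1 * Real.sin a2 * Real.cos q0) * (1 - gA2 ^ 2) +
          (Real.cos a0 * -Real.sin a1 + Real.sin a0 * Real.cos a1 * Real.cos q2) * (gA0 * gA2 - gA1)) /
        ((1 - gA2 ^ 2) * w) := by
    rw [div_eq_div_iff hden1 hden2]; ring
  have h2R : -(((Real.cos a2 * -Real.sin a0 + Real.sin a2 * Real.cos a0 * Real.cos q1) -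
            (-Real.sin a0 * Real.cos a1 + Real.cos a0 * Real.sin a1 * Real.cos q2) * gA0 - gA2 * 0) * (1 - gA2 ^ 2) * (1 - gA0 ^ 2) +
          (gA1 - gA2 * gA0) * (gA2 * (-Real.sin a0 * Real.cos a1 + Real.cos a0 * Real.sin a1 * Real.cos q2) * (1 - gA0 ^ 2) +
            gA0 * 0 * (1 - gA2 ^ 2))) /
        ((1 - gA2 ^ 2) * (1 - gA0 ^ 2) * w)
      = -((Real.cos a2 * -Real.sin a0 + Real.sin a2 * Real.cos a0 * Real.cos q1) * (1 - gA2 ^ 2) +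
          (-Real.sin a0 * Real.cos a1 + Real.cos a0 * Real.sin a1 * Real.cos q2) * (gA1 * gA2 - gA0)) /
        ((1 - gA2 ^ 2) * w) := by
    rw [div_eq_div_iff hden3 hden2]; ring
  rw [h2L, h2R]
  have key : Real.sin a1 * -((-Real.sin a1 * Real.cos a2 + Real.cos a1 * Real.sin a2 * Real.cos q0) * (1 - gA2 ^ 2) +
          (Real.cos a0 * -Real.sin a1 + Real.sin a0 * Real.cos a1 * Real.cos q2) * (gA0 * gA2 - gA1))
      = Real.sin a0 * -((Real.cos a2 * -Real.sin a0 + Real.sin a2 * Real.cos a0 * Real.cos q1) * (1 - gA2 ^ 2) +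
          (-Real.sin a0 * Real.cos a1 + Real.cos a0 * Real.sin a1 * Real.cos q2) * (gA1 * gA2 - gA0)) := by
    rw [hgA0, hgA1, hgA2]
    linear_combination
      (-(Real.cos a2 - Real.sin a1^2*Real.cos a2*Real.cos q2^2 + Real.sin a1^4*Real.cos a2*Real.cos q2^2
        - Real.cos a1*Real.sin a1*Real.sin a2*Real.cos q0 - Real.cos a1^2*Real.cos a2
        + Real.cos a1^2*Real.sin a1^2*Real.cos a2*Real.cos q2^2
        - Real.sin a0^2*Real.sin a1^2*Real.cos a2*Real.cos q2^2
        + Real.sin a0^2*Real.cos a1*Real.sin a1*Real.sin a2*Real.cos q1*Real.cos q2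
        - Real.cos a0*Real.sin a0*Real.cos a1*Real.sin a1*Real.cos a2*Real.cos q2
        + Real.cos a0*Real.sin a0*Real.cos a1^2*Real.sin a2*Real.cos q1)) * Real.sin_sq_add_cos_sq a0 +
      (-(-Real.cos a2 + Real.sin a1^2*Real.cos a2*Real.cos q2^2 + Real.cos a0*Real.sin a0*Real.sin a2*Real.cos q1
        - Real.cos a0*Real.sin a0*Real.sin a1^2*Real.sin a2*Real.cos q0*Real.cos q2
        + Real.cos a0*Real.sin a0*Real.cos a1*Real.sin a1*Real.cos a2*Real.cos q2
        + Real.cos a0^2*Real.cos a2 - Real.cos a0^2*Real.sin a1^2*Real.cos a2*Real.cos q2^2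
        - Real.cos a0^2*Real.cos a1*Real.sin a1*Real.sin a2*Real.cos q0)) * Real.sin_sq_add_cos_sq a1
  calc Real.sin a1 * (-((-Real.sin a1 * Real.cos a2 + Real.cos a1 * Real.sin a2 * Real.cos q0) * (1 - gA2 ^ 2) +
          (Real.cos a0 * -Real.sin a1 + Real.sin a0 * Real.cos a1 * Real.cos q2) * (gA0 * gA2 - gA1)) /
        ((1 - gA2 ^ 2) * w))
      = (Real.sin a1 * -((-Real.sin a1 * Real.cos a2 + Real.cos a1 * Real.sin a2 * Real.cos q0) * (1 - gA2 ^ 2) +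
          (Real.cos a0 * -Real.sin a1 + Real.sin a0 * Real.cos a1 * Real.cos q2) * (gA0 * gA2 - gA1))) /
        ((1 - gA2 ^ 2) * w) := by ring
    _ = (Real.sin a0 * -((Real.cos a2 * -Real.sin a0 + Real.sin a2 * Real.cos a0 * Real.cos q1) * (1 - gA2 ^ 2) +
          (-Real.sin a0 * Real.cos a1 + Real.cos a0 * Real.sin a1 * Real.cos q2) * (gA1 * gA2 - gA0))) /
        ((1 - gA2 ^ 2) * w) := by rw [key]
    _ = Real.sin a0 * (-((Real.cos a2 * -Real.sin a0 + Real.sin a2 * Real.cos a0 * Real.cos q1) * (1 - gA2 ^ 2) +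
          (-Real.sin a0 * Real.cos a1 + Real.cos a0 * Real.sin a1 * Real.cos q2) * (gA1 * gA2 - gA0)) /
        ((1 - gA2 ^ 2) * w)) := by ring

set_option maxHeartbeats 2000000 in
/-- Lemma 2.3 in the spherical background geometry:
`sin (r j) · ∂θ i / ∂r j = sin (r i) · ∂θ j / ∂r i` for all pairs of distinct
indices `i, j`. -/
theorem spherical_deriv_symm
    (Φ r : Fin 3 → ℝ)
    (hΦ : ∀ i, Φ i ∈ Set.Ico 0 π)
    (hr : ∀ i, 0 < r i)
    (hsum : r 0 + r 1 + r 2 < π)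
    (htri : ∀ i, ellS Φ r i < ellS Φ r (i + 1) + ellS Φ r (i + 2))
    (hperim : ellS Φ r 0 + ellS Φ r 1 + ellS Φ r 2 < 2 * π) :
    ∀ i j : Fin 3, i ≠ j →
      Real.sin (r j) * deriv (fun x => thetaS Φ (Function.update r j x) i) (r j) =
      Real.sin (r i) * deriv (fun x => thetaS Φ (Function.update r i x) j) (r i) := by
  have hr0 := hr 0
  have hr1 := hr 1
  have hr2 := hr 2
  have hrpi : ∀ i, r i < π := by
    intro i
    fin_cases i <;> simp <;> linarith
  -- the quantities gg i
  have hp : ∀ i, -1 < Real.cos (Φ i) := by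
    intro i
    have h := Real.strictAntiOn_cos (Set.mem_Icc.mpr ⟨(hΦ i).1, (hΦ i).2.le⟩)
      (Set.mem_Icc.mpr ⟨le_of_lt Real.pi_pos, le_refl π⟩) (hΦ i).2
    rw [Real.cos_pi] at h
    exact h
  have hp1 : ∀ i, Real.cos (Φ i) ≤ 1 := fun i => Real.cos_le_one _
  set gg : Fin 3 → ℝ := fun i => Real.cos (r (i + 1)) * Real.cos (r (i + 2)) +
      Real.sin (r (i + 1)) * Real.sin (r (i + 2)) * Real.cos (Φ i) with hgg
  have hsinr : ∀ i, 0 < Real.sin (r i) := fun i => Real.sin_pos_of_pos_of_lt_pi (hr i) (hrpi i)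
  have hggm : ∀ i, -1 < gg i := by
    intro i
    have h1 := hsinr (i + 1)
    have h2 := hsinr (i + 2)
    have h3 := hp i
    have h4 : -1 ≤ Real.cos (r (i + 1) + r (i + 2)) := Real.neg_one_le_cos _
    rw [Real.cos_add] at h4
    simp only [hgg]
    nlinarith [mul_pos h1 h2]
  have hggle : ∀ i, gg i ≤ 1 := by
    intro i
    have h1 := hsinr (i + 1)
    have h2 := hsinr (i + 2)
    have h3 := hp1 i
    have h4 : Real.cos (r (i + 1) - r (i + 2)) ≤ 1 := Real.cos_le_one _
    rw [Real.cos_sub] at h4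
    simp only [hgg]
    nlinarith [mul_pos h1 h2]
  have hell : ∀ i, ellS Φ r i = Real.arccos (gg i) := fun i => rfl
  have hcosell : ∀ i, Real.cos (ellS Φ r i) = gg i := by
    intro i
    rw [hell i]
    exact Real.cos_arccos (hggm i).le (hggle i)
  have hellnn : ∀ i, 0 ≤ ellS Φ r i := by
    intro i; rw [hell i]; exact Real.arccos_nonneg _
  have hellpi : ∀ i, ellS Φ r i ≤ π := by
    intro i; rw [hell i]; exact Real.arccos_le_pi _
  have ht0 := htri 0
  have ht1 := htri 1
  have ht2 := htri 2
  simp only [Fin.isValue, Fin.reduceAdd] at ht0 ht1 ht2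
  have hellpos : ∀ i, 0 < ellS Φ r i := by
    intro i
    rcases lt_or_eq_of_le (hellnn i) with h | h
    · exact h
    · exfalso
      fin_cases i <;> simp at h <;> linarith [hellnn 0, hellnn 1, hellnn 2]
  have hggp : ∀ i, gg i < 1 := by
    intro i
    have := hellpos i
    rw [hell i] at this
    exact Real.arccos_pos.mp this
  have hellltpi : ∀ i, ellS Φ r i < π := by
    intro i
    rcases lt_or_eq_of_le (hellpi i) with h | h
    · exact h
    · exfalso
      have := hcosell i
      rw [h, Real.cos_pi] at this
      exact (hggm i).ne' this.symm
  have hsinell : ∀ i, 0 < Real.sin (ellS Φ r i) :=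
    fun i => Real.sin_pos_of_pos_of_lt_pi (hellpos i) (hellltpi i)
  have hsinellsq : ∀ i, Real.sin (ellS Φ r i) ^ 2 = 1 - gg i ^ 2 := by
    intro i
    have := Real.sin_sq_add_cos_sq (ellS Φ r i)
    rw [hcosell i] at this
    linarith
  -- nondegeneracy: V > 0
  have habs : |ellS Φ r 1 - ellS Φ r 2| < ellS Φ r 0 := by
    rw [abs_sub_lt_iff]
    constructor <;> linarith
  have fac1 : Real.cos (ellS Φ r 0) < Real.cos (ellS Φ r 1 - ellS Φ r 2) := by
    rw [← Real.cos_abs (ellS Φ r 1 - ellS Φ r 2)]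
    exact Real.strictAntiOn_cos
      (Set.mem_Icc.mpr ⟨abs_nonneg _, le_trans habs.le (hellpi 0)⟩)
      (Set.mem_Icc.mpr ⟨(hellnn 0), hellpi 0⟩) habs
  have fac2 : Real.cos (ellS Φ r 1 + ellS Φ r 2) < Real.cos (ellS Φ r 0) := by
    rcases le_or_gt (ellS Φ r 1 + ellS Φ r 2) π with h | h
    · exact Real.strictAntiOn_cos
        (Set.mem_Icc.mpr ⟨(hellnn 0), hellpi 0⟩)
        (Set.mem_Icc.mpr ⟨by linarith [hellnn 1, hellnn 2], h⟩) ht0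
    · rw [← Real.cos_two_pi_sub (ellS Φ r 1 + ellS Φ r 2)]
      exact Real.strictAntiOn_cos
        (Set.mem_Icc.mpr ⟨(hellnn 0), hellpi 0⟩)
        (Set.mem_Icc.mpr ⟨by linarith, by linarith⟩)
        (by linarith [hperim])
  have hV : 0 < 1 - gg 0 ^ 2 - gg 1 ^ 2 - gg 2 ^ 2 + 2 * gg 0 * gg 1 * gg 2 := by
    have hVeq : 1 - gg 0 ^ 2 - gg 1 ^ 2 - gg 2 ^ 2 + 2 * gg 0 * gg 1 * gg 2 =
        (Real.cos (ellS Φ r 1 - ellS Φ r 2) - Real.cos (ellS Φ r 0)) *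
        (Real.cos (ellS Φ r 0) - Real.cos (ellS Φ r 1 + ellS Φ r 2)) := by
      rw [Real.cos_sub, Real.cos_add, hcosell 0, hcosell 1, hcosell 2]
      linear_combination (-(Real.sin (ellS Φ r 2))^2) * hsinellsq 1 -
        (1 - gg 1 ^ 2) * hsinellsq 2
    rw [hVeq]
    exact mul_pos (by linarith) (by linarith)
  have hgg0 : gg 0 = Real.cos (r 1) * Real.cos (r 2) + Real.sin (r 1) * Real.sin (r 2) * Real.cos (Φ 0) := rfl
  have hgg1 : gg 1 = Real.cos (r 2) * Real.cos (r 0) + Real.sin (r 2) * Real.sin (r 0) * Real.cos (Φ 1) := rfl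
  have hgg2 : gg 2 = Real.cos (r 0) * Real.cos (r 1) + Real.sin (r 0) * Real.sin (r 1) * Real.cos (Φ 2) := rfl
  have hV0 : 0 < 1 - gg 0 ^ 2 - gg 1 ^ 2 - gg 2 ^ 2 + 2 * gg 0 * gg 1 * gg 2 := hV
  have hV1 : 0 < 1 - gg 1 ^ 2 - gg 2 ^ 2 - gg 0 ^ 2 + 2 * gg 1 * gg 2 * gg 0 :=
    lt_of_lt_of_eq hV (by ring)
  have hV2 : 0 < 1 - gg 2 ^ 2 - gg 0 ^ 2 - gg 1 ^ 2 + 2 * gg 2 * gg 0 * gg 1 :=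
    lt_of_lt_of_eq hV (by ring)
  have key01 := pairAux (Φ 0) (Φ 1) (Φ 2) (r 0) (r 1) (r 2)
    (hggm 0) (hggp 0) (hggm 1) (hggp 1) (hggm 2) (hggp 2)
    (by rw [← hgg0, ← hgg1, ← hgg2]; exact hV0)
  have key12 := pairAux (Φ 1) (Φ 2) (Φ 0) (r 1) (r 2) (r 0)
    (hggm 1) (hggp 1) (hggm 2) (hggp 2) (hggm 0) (hggp 0)
    (by rw [← hgg1, ← hgg2, ← hgg0]; exact hV1)
  have key20 := pairAux (Φ 2) (Φ 0) (Φ 1) (r 2) (r 0) (r 1)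
    (hggm 2) (hggp 2) (hggm 0) (hggp 0) (hggm 1) (hggp 1)
    (by rw [← hgg2, ← hgg0, ← hgg1]; exact hV2)
  intro i j hij
  have hcases : ∀ k : Fin 3, k = 0 ∨ k = 1 ∨ k = 2 := by decide
  rcases hcases i with hi | hi | hi <;> rcases hcases j with hj | hj | hj <;> subst hi <;> subst hj
  · exact absurd rfl hij
  · simp only [thetaS, ellS, Fin.isValue, Fin.reduceAdd,
      Function.update_self,
      Function.update_of_ne (show (0:Fin 3) ≠ 1 by decide),
      Function.update_of_ne (show (2:Fin 3) ≠ 1 by decide),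
      Function.update_of_ne (show (1:Fin 3) ≠ 0 by decide),
      Function.update_of_ne (show (2:Fin 3) ≠ 0 by decide),
      Function.update_of_ne (show (0:Fin 3) ≠ 2 by decide),
      Function.update_of_ne (show (1:Fin 3) ≠ 2 by decide)]
    exact key01
  · simp only [thetaS, ellS, Fin.isValue, Fin.reduceAdd,
      Function.update_self,
      Function.update_of_ne (show (0:Fin 3) ≠ 1 by decide),
      Function.update_of_ne (show (2:Fin 3) ≠ 1 by decide),
      Function.update_of_ne (show (1:Fin 3) ≠ 0 by decide),
      Function.update_of_ne (show (2:Fin 3) ≠ 0 by decide),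
      Function.update_of_ne (show (0:Fin 3) ≠ 2 by decide),
      Function.update_of_ne (show (1:Fin 3) ≠ 2 by decide)]
    exact key20.symm
  · simp only [thetaS, ellS, Fin.isValue, Fin.reduceAdd,
      Function.update_self,
      Function.update_of_ne (show (0:Fin 3) ≠ 1 by decide),
      Function.update_of_ne (show (2:Fin 3) ≠ 1 by decide),
      Function.update_of_ne (show (1:Fin 3) ≠ 0 by decide),
      Function.update_of_ne (show (2:Fin 3) ≠ 0 by decide),
      Function.update_of_ne (show (0:Fin 3) ≠ 2 by decide),
      Function.update_of_ne (show (1:Fin 3) ≠ 2 by decide)]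
    exact key01.symm
  · exact absurd rfl hij
  · simp only [thetaS, ellS, Fin.isValue, Fin.reduceAdd,
      Function.update_self,
      Function.update_of_ne (show (0:Fin 3) ≠ 1 by decide),
      Function.update_of_ne (show (2:Fin 3) ≠ 1 by decide),
      Function.update_of_ne (show (1:Fin 3) ≠ 0 by decide),
      Function.update_of_ne (show (2:Fin 3) ≠ 0 by decide),
      Function.update_of_ne (show (0:Fin 3) ≠ 2 by decide),
      Function.update_of_ne (show (1:Fin 3) ≠ 2 by decide)]
    exact key12
  · simp only [thetaS, ellS, Fin.isValue, Fin.reduceAdd,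
      Function.update_self,
      Function.update_of_ne (show (0:Fin 3) ≠ 1 by decide),
      Function.update_of_ne (show (2:Fin 3) ≠ 1 by decide),
      Function.update_of_ne (show (1:Fin 3) ≠ 0 by decide),
      Function.update_of_ne (show (2:Fin 3) ≠ 0 by decide),
      Function.update_of_ne (show (0:Fin 3) ≠ 2 by decide),
      Function.update_of_ne (show (1:Fin 3) ≠ 2 by decide)]
    exact key20
  · simp only [thetaS, ellS, Fin.isValue, Fin.reduceAdd,
      Function.update_self,
      Function.update_of_ne (show (0:Fin 3) ≠ 1 by decide),
      Function.update_of_ne (show (2:Fin 3) ≠ 1 by decide),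
      Function.update_of_ne (show (1:Fin 3) ≠ 0 by decide),
      Function.update_of_ne (show (2:Fin 3) ≠ 0 by decide),
      Function.update_of_ne (show (0:Fin 3) ≠ 2 by decide),
      Function.update_of_ne (show (1:Fin 3) ≠ 2 by decide)]
    exact key12.symm
  · exact absurd rfl hij
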